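/- Let G be an M(2,2)-connected graph with an ear decomposition C₁, …, C_t (t ≥ 2) of its (2,2)-sparsity matroid, let H_i be the subgraph induced by C_i, Y = V(H_t) \ ⋃_{i<t} V(H_i) and X = V(H_t) \ Y. If Y is non-empty, then X is critical in H_t, i.e. the number of edges of H_t induced by X equals 2|X| - 2. -/

import Mathlib

set_option linter.unusedSectionVars false
set_option maxHeartbeats 1000000

/-- The vertices incident to an edge set `C`. -/
def edgeVerts {V : Type*} (C : Set (Sym2 V)) : Set V :=
  {v : V | ∃ e ∈ C, v ∈ e}

/-- An edge set `C ⊆ E(G)` is (the edge set of) a `(2,2)`-circuit subgraph of `G`. -/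
def IsCircuitEdges {V : Type*} (G : SimpleGraph V) (C : Set (Sym2 V)) : Prop :=
  C ⊆ G.edgeSet ∧ C.ncard + 1 = 2 * (edgeVerts C).ncard ∧
  ∀ D : Set (Sym2 V), D ⊆ C → D ≠ C → D ≠ ∅ →
    D.ncard + 2 ≤ 2 * (edgeVerts D).ncard

/-- `G` is `M(2,2)`-connected: no isolated vertices, at least two edges, and every
pair of edges lies in a common `(2,2)`-circuit of `G`. -/
def M22Connected {V : Type*} (G : SimpleGraph V) : Prop :=
  (∀ v : V, ∃ w : V, G.Adj v w) ∧ 2 ≤ G.edgeSet.ncard ∧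
  ∀ e ∈ G.edgeSet, ∀ f ∈ G.edgeSet,
    ∃ C : Set (Sym2 V), IsCircuitEdges G C ∧ e ∈ C ∧ f ∈ C

section Infra
variable {V : Type*} [Fintype V]

lemma edgeVerts_mono {A B : Set (Sym2 V)} (h : A ⊆ B) : edgeVerts A ⊆ edgeVerts B := by
  rintro v ⟨e, he, hv⟩; exact ⟨e, h he, hv⟩

lemma edgeVerts_union (A B : Set (Sym2 V)) :
    edgeVerts (A ∪ B) = edgeVerts A ∪ edgeVerts B := by
  ext v; constructor
  · rintro ⟨e, (he | he), hv⟩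
    · exact Or.inl ⟨e, he, hv⟩
    · exact Or.inr ⟨e, he, hv⟩
  · rintro (⟨e, he, hv⟩ | ⟨e, he, hv⟩)
    · exact ⟨e, Or.inl he, hv⟩
    · exact ⟨e, Or.inr he, hv⟩

lemma edgeVerts_biUnion {ι : Type*} (s : Set ι) (f : ι → Set (Sym2 V)) :
    edgeVerts (⋃ i ∈ s, f i) = ⋃ i ∈ s, edgeVerts (f i) := by
  ext v; constructor
  · rintro ⟨e, he, hv⟩
    simp only [Set.mem_iUnion] at he ⊢
    obtain ⟨i, hi, hei⟩ := he
    exact ⟨i, hi, e, hei, hv⟩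
  · intro h
    simp only [Set.mem_iUnion] at h
    obtain ⟨i, hi, e, hei, hv⟩ := h
    exact ⟨e, Set.mem_biUnion hi hei, hv⟩

/-- `(2,2)`-sparse edge sets. -/
def Sparse (S : Set (Sym2 V)) : Prop :=
  ∀ D : Set (Sym2 V), D ⊆ S → D.Nonempty → D.ncard + 2 ≤ 2 * (edgeVerts D).ncard

lemma sparse_empty : Sparse (∅ : Set (Sym2 V)) := by
  intro D hD hne
  exact absurd (Set.subset_empty_iff.mp hD) (Set.nonempty_iff_ne_empty.mp hne)

lemma Sparse.mono {A B : Set (Sym2 V)} (h : Sparse B) (hAB : A ⊆ B) : Sparse A :=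
  fun D hD hne => h D (hD.trans hAB) hne

/-- rank function of the `(2,2)`-sparsity matroid: maximum size of a sparse subset. -/
noncomputable def rk (S : Set (Sym2 V)) : ℕ :=
  sSup {n | ∃ I : Set (Sym2 V), I ⊆ S ∧ Sparse I ∧ I.ncard = n}

lemma rk_bddAbove (S : Set (Sym2 V)) :
    BddAbove {n | ∃ I : Set (Sym2 V), I ⊆ S ∧ Sparse I ∧ I.ncard = n} := by
  refine ⟨Fintype.card (Sym2 V), ?_⟩
  rintro n ⟨I, _, _, rfl⟩
  calc I.ncard ≤ (Set.univ : Set (Sym2 V)).ncard :=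
      Set.ncard_le_ncard (Set.subset_univ I) Set.finite_univ
    _ = Fintype.card (Sym2 V) := by rw [Set.ncard_univ, Nat.card_eq_fintype_card]

lemma le_rk {S I : Set (Sym2 V)} (hI : I ⊆ S) (hsp : Sparse I) : I.ncard ≤ rk S :=
  le_csSup (rk_bddAbove S) ⟨I, hI, hsp, rfl⟩

lemma exists_rk_witness (S : Set (Sym2 V)) :
    ∃ I : Set (Sym2 V), I ⊆ S ∧ Sparse I ∧ I.ncard = rk S := by
  have hmem : (0 : ℕ) ∈ {n | ∃ I : Set (Sym2 V), I ⊆ S ∧ Sparse I ∧ I.ncard = n} :=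
    ⟨∅, Set.empty_subset S, sparse_empty, by simp⟩
  exact Nat.sSup_mem ⟨0, hmem⟩ (rk_bddAbove S)

lemma rk_mono {S T : Set (Sym2 V)} (h : S ⊆ T) : rk S ≤ rk T := by
  obtain ⟨I, hIS, hsp, hcard⟩ := exists_rk_witness S
  rw [← hcard]; exact le_rk (hIS.trans h) hsp

lemma rk_le (S : Set (Sym2 V)) (hne : S.Nonempty) :
    rk S + 2 ≤ 2 * (edgeVerts S).ncard := by
  obtain ⟨I, hIS, hsp, hcard⟩ := exists_rk_witness S
  have hVne : (edgeVerts S).Nonempty := by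
    obtain ⟨e, he⟩ := hne
    induction e using Sym2.ind with
    | _ a b => exact ⟨a, s(a, b), he, by simp⟩
  rcases I.eq_empty_or_nonempty with rfl | hIne
  · have h1 : 0 < (edgeVerts S).ncard := (Set.ncard_pos (Set.toFinite _)).mpr hVne
    have : rk S = 0 := by rw [← hcard]; simp
    omega
  · have h1 := hsp I subset_rfl hIne
    have h2 := Set.ncard_le_ncard (edgeVerts_mono hIS) (Set.toFinite _)
    omega

/-- a maximal sparse subset of `S` containing a maximum sparse subset of `D ⊆ S`. -/
lemma exists_maximal_sparse (S D : Set (Sym2 V)) (hDS : D ⊆ S) :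
    ∃ B : Set (Sym2 V), B ⊆ S ∧ Sparse B ∧ (rk D ≤ (B ∩ D).ncard) ∧
      ∀ f ∈ S, f ∉ B → ¬ Sparse (insert f B) := by
  obtain ⟨I, hID, hIsp, hIcard⟩ := exists_rk_witness D
  set T : Set ℕ := {n | ∃ B : Set (Sym2 V), I ⊆ B ∧ B ⊆ S ∧ Sparse B ∧ B.ncard = n} with hT
  have hTne : T.Nonempty := ⟨I.ncard, I, subset_rfl, hID.trans hDS, hIsp, rfl⟩
  have hTbdd : BddAbove T := by
    refine ⟨Fintype.card (Sym2 V), ?_⟩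
    rintro n ⟨B, _, _, _, rfl⟩
    calc B.ncard ≤ (Set.univ : Set (Sym2 V)).ncard :=
        Set.ncard_le_ncard (Set.subset_univ B) Set.finite_univ
      _ = Fintype.card (Sym2 V) := by rw [Set.ncard_univ, Nat.card_eq_fintype_card]
  obtain ⟨B, hIB, hBS, hBsp, hBcard⟩ := Nat.sSup_mem hTne hTbdd
  refine ⟨B, hBS, hBsp, ?_, ?_⟩
  · calc rk D = I.ncard := hIcard.symm
      _ ≤ (B ∩ D).ncard := Set.ncard_le_ncard (Set.subset_inter hIB hID) (Set.toFinite _)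
  · intro f hfS hfB hsp
    have : (insert f B).ncard ∈ T :=
      ⟨insert f B, hIB.trans (Set.subset_insert f B), Set.insert_subset hfS hBS, hsp, rfl⟩
    have hle := le_csSup hTbdd this
    rw [Set.ncard_insert_of_notMem hfB (Set.toFinite _), hBcard] at hle
    omega

/-- every non-sparse set contains a minimal non-sparse subset -/
lemma exists_minimal_dep :
    ∀ n : ℕ, ∀ T : Set (Sym2 V), T.ncard = n → ¬ Sparse T →
      ∃ Cf : Set (Sym2 V), Cf ⊆ T ∧ ¬ Sparse Cf ∧ ∀ E : Set (Sym2 V), E ⊂ Cf → Sparse E := by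
  intro n
  induction n using Nat.strong_induction_on with
  | _ n ih =>
    intro T hcard hdep
    by_cases h : ∀ E : Set (Sym2 V), E ⊂ T → Sparse E
    · exact ⟨T, subset_rfl, hdep, h⟩
    · push_neg at h
      obtain ⟨E, hET, hEdep⟩ := h
      have hlt : E.ncard < n := hcard ▸ Set.ncard_lt_ncard hET (Set.toFinite _)
      obtain ⟨Cf, h1, h2, h3⟩ := ih E.ncard hlt E rfl hEdep
      exact ⟨Cf, h1.trans hET.subset, h2, h3⟩

lemma sparse_singleton_edge (G : SimpleGraph V) {x : Sym2 V} (hx : x ∈ G.edgeSet) :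
    Sparse ({x} : Set (Sym2 V)) := by
  intro E hE hEne
  have hE' : E = {x} := hEne.subset_singleton_iff.mp hE
  subst hE'
  induction x using Sym2.ind with
  | _ a b =>
    have hab : a ≠ b := fun h => G.not_isDiag_of_mem_edgeSet hx (by simp [h])
    have hev : edgeVerts ({s(a, b)} : Set (Sym2 V)) = {a, b} := by
      ext v
      simp only [edgeVerts, Set.mem_setOf_eq, Set.mem_singleton_iff, exists_eq_left,
        Sym2.mem_iff, Set.mem_insert_iff]
    rw [hev, Set.ncard_singleton, Set.ncard_pair hab]; omega

/-- a minimal non-sparse set of edges of `G` is a circuit -/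
lemma minimal_dep_circuit (G : SimpleGraph V) {Cf : Set (Sym2 V)} (hsub : Cf ⊆ G.edgeSet)
    (hdep : ¬ Sparse Cf) (hmin : ∀ E : Set (Sym2 V), E ⊂ Cf → Sparse E) :
    IsCircuitEdges G Cf := by
  have hviol : Cf.Nonempty ∧ 2 * (edgeVerts Cf).ncard ≤ Cf.ncard + 1 := by
    rw [Sparse] at hdep; push_neg at hdep
    obtain ⟨E, hE, hEne, hElt⟩ := hdep
    rcases eq_or_ne E Cf with rfl | hne
    · exact ⟨hEne, by omega⟩
    · have := hmin E ⟨hE, fun h => hne (le_antisymm hE h)⟩ E subset_rfl hEne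
      omega
  obtain ⟨hCfne, hCfcount⟩ := hviol
  obtain ⟨x, hx⟩ := hCfne
  have hns : Cf ≠ {x} := by
    rintro rfl
    exact hdep (sparse_singleton_edge G (hsub rfl))
  have hssub : Cf \ {x} ⊂ Cf := Set.sdiff_singleton_ssubset.mpr hx
  have hsp := hmin _ hssub
  have hne' : (Cf \ {x}).Nonempty := by
    rcases Set.eq_empty_or_nonempty (Cf \ {x}) with h | h
    · exact absurd (by
        apply le_antisymm _ (Set.singleton_subset_iff.mpr hx)
        intro y hy
        rcases eq_or_ne y x with rfl | hyx
        · exact rfl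
        · exact absurd (Set.mem_diff_of_mem hy (by simpa using hyx)) (h ▸ Set.notMem_empty y))
        hns
    · exact h
  have hcount := hsp _ subset_rfl hne'
  have hcard : (Cf \ {x}).ncard + 1 = Cf.ncard := by
    rw [Set.ncard_diff_singleton_add_one hx (Set.toFinite _)]
  have hmono := Set.ncard_le_ncard
    (edgeVerts_mono (Set.diff_subset : Cf \ {x} ⊆ Cf)) (Set.toFinite _)
  refine ⟨hsub, by omega, ?_⟩
  intro E hE hEne hEnonempty
  have : E ⊂ Cf := ⟨hE, fun h => hEne (le_antisymm hE h)⟩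
  exact hmin E this E subset_rfl (Set.nonempty_iff_ne_empty.mpr hEnonempty)

/-- Key rank step: by minimality of the ear, adding the circuit `Cl` to `D`
increases the rank by at least `|Cl \ D| - 1`. -/
lemma factB (G : SimpleGraph V) (D Cl : Set (Sym2 V)) (hDsub : D ⊆ G.edgeSet)
    (hCl : IsCircuitEdges G Cl)
    (hmin : ∀ C' : Set (Sym2 V), IsCircuitEdges G C' → (C' ∩ D).Nonempty →
      (C' \ D).Nonempty → ¬ ((C' \ D) ⊂ (Cl \ D))) :
    rk D + (Cl \ D).ncard ≤ rk (D ∪ Cl) + 1 := by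
  set m := (Cl \ D).ncard with hm
  by_cases hm1 : m ≤ 1
  · have := rk_mono (Set.subset_union_left : D ⊆ D ∪ Cl)
    omega
  by_contra hcon
  push_neg at hcon
  obtain ⟨B, hBS, hBsp, hBD, hBmax⟩ := exists_maximal_sparse (D ∪ Cl) D Set.subset_union_left
  have hBle : B.ncard ≤ rk (D ∪ Cl) := le_rk hBS hBsp
  have hsplit : (B ∩ D).ncard + (B \ D).ncard = B.ncard :=
    Set.ncard_inter_add_ncard_diff_eq_ncard B D
  have hBdiff : B \ D ⊆ Cl \ D := by
    rintro x ⟨hxB, hxD⟩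
    exact ⟨(hBS hxB).resolve_left hxD, hxD⟩
  have hinter : (Cl \ D) ∩ B = B \ D := by
    ext x
    exact ⟨fun ⟨h1, h2⟩ => ⟨h2, h1.2⟩, fun h => ⟨hBdiff h, h.1⟩⟩
  have hsplit2 : ((Cl \ D) ∩ B).ncard + ((Cl \ D) \ B).ncard = m :=
    Set.ncard_inter_add_ncard_diff_eq_ncard (Cl \ D) B
  have htwo : 1 < ((Cl \ D) \ B).ncard := by
    rw [hinter] at hsplit2
    omega
  obtain ⟨f, g, hf, hg, hfg⟩ := (Set.one_lt_ncard_iff (Set.toFinite _)).mp htwo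
  have hsubE : D ∪ Cl ⊆ G.edgeSet := Set.union_subset hDsub hCl.1
  have hfDC : f ∈ D ∪ Cl := Or.inr hf.1.1
  have hdep := hBmax f hfDC hf.2
  obtain ⟨Cf, hCfsub, hCfdep, hCfmin⟩ :=
    exists_minimal_dep (insert f B).ncard (insert f B) rfl hdep
  have hfCf : f ∈ Cf := by
    by_contra hfCf
    have : Cf ⊆ B := fun x hxCf =>
      ((Set.mem_insert_iff.mp (hCfsub hxCf)).resolve_left (fun h => hfCf (h ▸ hxCf)))
    exact hCfdep (hBsp.mono this)
  have hCfE : Cf ⊆ G.edgeSet :=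
    hCfsub.trans ((Set.insert_subset hfDC hBS).trans hsubE)
  have hCfcirc : IsCircuitEdges G Cf := minimal_dep_circuit G hCfE hCfdep hCfmin
  have hCfd : Cf \ D ⊆ Cl \ D := by
    rintro x ⟨hxCf, hxD⟩
    rcases Set.mem_insert_iff.mp (hCfsub hxCf) with rfl | hxB
    · exact hf.1
    · exact hBdiff ⟨hxB, hxD⟩
  have hgCf : g ∉ Cf := by
    intro hgCf
    rcases Set.mem_insert_iff.mp (hCfsub hgCf) with rfl | hgB
    · exact hfg rfl
    · exact hg.2 hgB
  have hproper : (Cf \ D) ⊂ (Cl \ D) := by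
    refine ⟨hCfd, fun h => ?_⟩
    exact hgCf (h hg.1).1
  have hCfD : (Cf ∩ D).Nonempty := by
    by_contra hempty
    rw [Set.not_nonempty_iff_eq_empty] at hempty
    have hCfCl : Cf ⊆ Cl := by
      intro x hxCf
      by_cases hxD : x ∈ D
      · exact absurd (Set.mem_inter hxCf hxD) (hempty ▸ Set.notMem_empty x)
      · exact (hCfd ⟨hxCf, hxD⟩).1
    have hne : Cf ≠ Cl := fun h => hgCf (h ▸ hg.1.1)
    apply hCfdep
    intro E hE hEne
    exact hCl.2.2 E (hE.trans hCfCl)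
      (fun h => hne (le_antisymm hCfCl (h ▸ hE)))
      (Set.nonempty_iff_ne_empty.mp hEne)
  exact hmin Cf hCfcirc hCfD ⟨f, hfCf, hf.1.2⟩ hproper

/-- Counting: the ear adds at least `2|Y| + 1` new edges. -/
lemma key_count (G : SimpleGraph V) (D Cl : Set (Sym2 V)) (hCl : IsCircuitEdges G Cl)
    (h1 : (Cl ∩ D).Nonempty) (h2 : (Cl \ D).Nonempty) :
    2 * (edgeVerts Cl \ edgeVerts D).ncard + 1 ≤ (Cl \ D).ncard := by
  rcases Set.eq_empty_or_nonempty (edgeVerts Cl \ edgeVerts D) with hY | hY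
  · rw [hY]
    have := (Set.ncard_pos (Set.toFinite _)).mpr h2
    simpa using Nat.succ_le_of_lt this
  · set EX := {e ∈ Cl | ∀ v ∈ e, v ∈ edgeVerts D} with hEXdef
    have hsubCl : EX ⊆ Cl := Set.sep_subset _ _
    have hCD : Cl ∩ D ⊆ EX := by
      rintro e ⟨heCl, heD⟩
      exact ⟨heCl, fun v hv => ⟨e, heD, hv⟩⟩
    have hEXne : EX.Nonempty := h1.mono hCD
    have hEXneq : EX ≠ Cl := by
      obtain ⟨y, hyCl, hyD⟩ := hY
      obtain ⟨e, heCl, hy⟩ := hyCl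
      intro h
      have : e ∈ EX := h ▸ heCl
      exact hyD (this.2 y hy)
    have hcount := hCl.2.2 EX hsubCl hEXneq (Set.nonempty_iff_ne_empty.mp hEXne)
    have hVsub : edgeVerts EX ⊆ edgeVerts Cl ∩ edgeVerts D := by
      rintro v ⟨e, ⟨heCl, hall⟩, hv⟩
      exact ⟨⟨e, heCl, hv⟩, hall v hv⟩
    have h3 : (edgeVerts EX).ncard ≤ (edgeVerts Cl ∩ edgeVerts D).ncard :=
      Set.ncard_le_ncard hVsub (Set.toFinite _)
    have h4 : (Cl ∩ D).ncard ≤ EX.ncard := Set.ncard_le_ncard hCD (Set.toFinite _)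
    have h5 : (Cl ∩ D).ncard + (Cl \ D).ncard = Cl.ncard :=
      Set.ncard_inter_add_ncard_diff_eq_ncard Cl D
    have h6 : (edgeVerts Cl ∩ edgeVerts D).ncard + (edgeVerts Cl \ edgeVerts D).ncard
        = (edgeVerts Cl).ncard := Set.ncard_inter_add_ncard_diff_eq_ncard _ _
    have h7 := hCl.2.1
    omega

lemma ncard_edgeVerts_union (D Cl : Set (Sym2 V)) :
    (edgeVerts (D ∪ Cl)).ncard
      = (edgeVerts D).ncard + (edgeVerts Cl \ edgeVerts D).ncard := by
  rw [edgeVerts_union, ← Set.union_diff_self,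
    Set.ncard_union_eq (disjoint_sdiff_self_right) (Set.toFinite _) (Set.toFinite _)]

/-- rank induction step. -/
lemma rk_step (G : SimpleGraph V) (D Cl : Set (Sym2 V)) (hDsub : D ⊆ G.edgeSet)
    (hCl : IsCircuitEdges G Cl)
    (h1 : (Cl ∩ D).Nonempty) (h2 : (Cl \ D).Nonempty)
    (hmin : ∀ C' : Set (Sym2 V), IsCircuitEdges G C' → (C' ∩ D).Nonempty →
      (C' \ D).Nonempty → ¬ ((C' \ D) ⊂ (Cl \ D)))
    (ih : 2 * (edgeVerts D).ncard ≤ rk D + 2) :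
    2 * (edgeVerts (D ∪ Cl)).ncard ≤ rk (D ∪ Cl) + 2 := by
  have hfB := factB G D Cl hDsub hCl hmin
  have hkc := key_count G D Cl hCl h1 h2
  have hV := ncard_edgeVerts_union D Cl
  omega

/-- base case: a circuit spans its vertex set. -/
lemma rk_circuit (G : SimpleGraph V) (Cl : Set (Sym2 V)) (hCl : IsCircuitEdges G Cl) :
    2 * (edgeVerts Cl).ncard ≤ rk Cl + 2 := by
  have hne : Cl.Nonempty := by
    rcases Set.eq_empty_or_nonempty Cl with rfl | h
    · exfalso
      have h21 := hCl.2.1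
      have hev : edgeVerts (∅ : Set (Sym2 V)) = ∅ := by
        ext v; exact ⟨fun ⟨e, he, _⟩ => he.elim, fun h => h.elim⟩
      rw [hev] at h21
      simp at h21
    · exact h
  obtain ⟨x, hx⟩ := hne
  have hsp : Sparse (Cl \ {x}) := by
    intro E hE hEne
    refine hCl.2.2 E (hE.trans Set.diff_subset) (fun h => ?_)
      (Set.nonempty_iff_ne_empty.mp hEne)
    have hxE : x ∈ E := h ▸ hx
    exact (hE hxE).2 rfl
  have hle : (Cl \ {x}).ncard ≤ rk Cl := le_rk Set.diff_subset hsp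
  have hcard : (Cl \ {x}).ncard + 1 = Cl.ncard :=
    Set.ncard_diff_singleton_add_one hx (Set.toFinite _)
  have := hCl.2.1
  omega

end Infra

theorem ear_decomposition_X_critical {V : Type*} [Fintype V]
    (G : SimpleGraph V) (hM : M22Connected G)
    (t : ℕ) (ht : 2 ≤ t) (C : Fin t → Set (Sym2 V))
    (hcirc : ∀ i : Fin t, IsCircuitEdges G (C i))
    (hE1 : ∀ i : Fin t, 0 < (i : ℕ) → (C i ∩ ⋃ j ∈ Set.Iio i, C j).Nonempty)
    (hE2 : ∀ i : Fin t, 0 < (i : ℕ) → (C i \ ⋃ j ∈ Set.Iio i, C j).Nonempty)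
    (hE3 : ∀ i : Fin t, 0 < (i : ℕ) → ∀ C' : Set (Sym2 V), IsCircuitEdges G C' →
      (C' ∩ ⋃ j ∈ Set.Iio i, C j).Nonempty →
      (C' \ ⋃ j ∈ Set.Iio i, C j).Nonempty →
      ¬ ((C' \ ⋃ j ∈ Set.Iio i, C j) ⊂ (C i \ ⋃ j ∈ Set.Iio i, C j)))
    (hcover : (⋃ i : Fin t, C i) = G.edgeSet)
    (last : Fin t) (hlast : (last : ℕ) = t - 1)
    (Y : Set V) (hY : Y = edgeVerts (C last) \ ⋃ j ∈ Set.Iio last, edgeVerts (C j))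
    (X : Set V) (hX : X = edgeVerts (C last) \ Y)
    (hYne : Y.Nonempty) :
    {e ∈ C last | ∀ v ∈ e, v ∈ X}.ncard + 2 = 2 * X.ncard := by
  classical
  -- partial unions
  set S : ℕ → Set (Sym2 V) := fun n => ⋃ j ∈ {j : Fin t | (j : ℕ) ≤ n}, C j with hS
  have hSsub : ∀ n, S n ⊆ G.edgeSet := by
    intro n
    exact Set.iUnion₂_subset fun j _ => (hcirc j).1
  -- rewriting `Set.Iio i` unions
  have hIio : ∀ i : Fin t, 0 < (i : ℕ) → (⋃ j ∈ Set.Iio i, C j) = S ((i : ℕ) - 1) := by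
    intro i hi
    have : Set.Iio i = {j : Fin t | (j : ℕ) ≤ (i : ℕ) - 1} := by
      ext j
      simp only [Set.mem_Iio, Set.mem_setOf_eq, Fin.lt_def]
      omega
    rw [this]
  -- the rank induction
  have key : ∀ n : ℕ, n < t → 2 * (edgeVerts (S n)).ncard ≤ rk (S n) + 2 := by
    intro n
    induction n with
    | zero =>
      intro hlt
      have hz : S 0 = C ⟨0, hlt⟩ := by
        apply Set.eq_of_subset_of_subset
        · refine Set.iUnion₂_subset fun j hj => ?_
          have : j = ⟨0, hlt⟩ := Fin.ext (Nat.le_zero.mp hj)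
          rw [this]
        · intro x hx
          exact Set.mem_biUnion (by simp) hx
      rw [hz]
      exact rk_circuit G _ (hcirc _)
    | succ n ihn =>
      intro hlt
      have ihn' := ihn (by omega)
      set i : Fin t := ⟨n + 1, hlt⟩ with hi
      have hipos : 0 < (i : ℕ) := by simp [hi]
      have hIi : (⋃ j ∈ Set.Iio i, C j) = S n := by
        rw [hIio i hipos]
        congr 1
      have hSn : S (n + 1) = S n ∪ C i := by
        ext x
        simp only [hS, Set.mem_iUnion, Set.mem_union, Set.mem_setOf_eq, exists_prop]
        constructor
        · rintro ⟨j, hj, hx⟩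
          rcases Nat.lt_or_ge (j : ℕ) (n + 1) with h' | h'
          · exact Or.inl ⟨j, by omega, hx⟩
          · have : j = i := Fin.ext (by simp [hi]; omega)
            exact Or.inr (this ▸ hx)
        · rintro (⟨j, hj, hx⟩ | hx)
          · exact ⟨j, by omega, hx⟩
          · exact ⟨i, by simp [hi], hx⟩
      have h1 := hE1 i hipos
      have h2 := hE2 i hipos
      have h3 := hE3 i hipos
      rw [hIi] at h1 h2 h3
      rw [hSn]
      exact rk_step G (S n) (C i) (hSsub n) (hcirc i) h1 h2 h3 ihn'
  -- setup at the last ear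
  have hlastpos : 0 < (last : ℕ) := by omega
  set D : Set (Sym2 V) := ⋃ j ∈ Set.Iio last, C j with hD
  set Cl : Set (Sym2 V) := C last with hCl
  have hDS : D = S ((last : ℕ) - 1) := hIio last hlastpos
  have ihD : 2 * (edgeVerts D).ncard ≤ rk D + 2 := by
    rw [hDS]
    exact key _ (by omega)
  have h1 : (Cl ∩ D).Nonempty := hE1 last hlastpos
  have h2 : (Cl \ D).Nonempty := hE2 last hlastpos
  have hclast : IsCircuitEdges G Cl := hcirc last
  have hfB : rk D + (Cl \ D).ncard ≤ rk (D ∪ Cl) + 1 :=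
    factB G D Cl (hDS ▸ hSsub _) hclast (hE3 last hlastpos)
  have hUne : (D ∪ Cl).Nonempty := h2.mono fun x hx => Or.inr hx.1
  have hrkle : rk (D ∪ Cl) + 2 ≤ 2 * (edgeVerts (D ∪ Cl)).ncard := rk_le _ hUne
  have hcardV := ncard_edgeVerts_union D Cl
  -- identify Y and X
  have hYv : Y = edgeVerts Cl \ edgeVerts D := by
    rw [hY, hD, edgeVerts_biUnion]
  have hXv : X = edgeVerts Cl ∩ edgeVerts D := by
    rw [hX, hYv]
    ext v
    simp only [Set.mem_diff, Set.mem_inter_iff]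
    tauto
  -- bound the number of new edges
  have hm : (Cl \ D).ncard ≤ 2 * Y.ncard + 1 := by
    rw [hYv]
    omega
  -- the X-induced edge set
  set EX : Set (Sym2 V) := {e ∈ C last | ∀ v ∈ e, v ∈ X} with hEX
  have hsubCl : EX ⊆ Cl := Set.sep_subset _ _
  have hCD : Cl ∩ D ⊆ EX := by
    rintro e ⟨heCl, heD⟩
    refine ⟨heCl, fun v hv => ?_⟩
    rw [hXv]
    exact ⟨⟨e, heCl, hv⟩, ⟨e, heD, hv⟩⟩
  have hEXne : EX.Nonempty := h1.mono hCD
  have hEXneq : EX ≠ Cl := by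
    obtain ⟨y, hy⟩ := hYne
    have hyVCl : y ∈ edgeVerts Cl := by
      rw [hYv] at hy; exact hy.1
    obtain ⟨e, heCl, hye⟩ := hyVCl
    intro h
    have heEX : e ∈ EX := h ▸ heCl
    have : y ∈ X := heEX.2 y hye
    rw [hX] at this
    exact this.2 hy
  have hup := hclast.2.2 EX hsubCl hEXneq (Set.nonempty_iff_ne_empty.mp hEXne)
  have hVEX : edgeVerts EX ⊆ X := by
    rintro v ⟨e, ⟨heCl, hall⟩, hv⟩
    exact hall v hv
  have hVEXle : (edgeVerts EX).ncard ≤ X.ncard := Set.ncard_le_ncard hVEX (Set.toFinite _)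
  have h4 : (Cl ∩ D).ncard ≤ EX.ncard := Set.ncard_le_ncard hCD (Set.toFinite _)
  have h5 : (Cl ∩ D).ncard + (Cl \ D).ncard = Cl.ncard :=
    Set.ncard_inter_add_ncard_diff_eq_ncard Cl D
  have hXY : X.ncard + Y.ncard = (edgeVerts Cl).ncard := by
    have hYsub : Y ⊆ edgeVerts Cl := by rw [hYv]; exact Set.diff_subset
    rw [hX]
    exact Set.ncard_diff_add_ncard_of_subset hYsub (Set.toFinite _)
  have hc2 := hclast.2.1
  omega
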